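/- Let ℓ be a prime number and n ≥ 0 an integer. The subset of Kⁿ corresponding, via coefficients, to the monic polynomials of degree n over K all of whose roots in K are roots of unity, is a closed subset of Kⁿ and is discrete in the subspace topology. -/

import Mathlib

open Polynomial

section Helpers

variable {K : Type*} [NormedField K] (hna : IsNonarchimedean (fun x : K => ‖x‖))
include hna

-- nonarch finite sum bound
lemma na_sum_le {ι : Type*} (s : Finset ι) (v : ι → K) {B : ℝ} (hB : 0 ≤ B)
    (h : ∀ i ∈ s, ‖v i‖ ≤ B) : ‖∑ i ∈ s, v i‖ ≤ B := by
  classical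
  induction s using Finset.cons_induction with
  | empty => simpa using hB
  | cons a s ha ih =>
      rw [Finset.sum_cons]
      refine le_trans (hna _ _) (max_le (h a (Finset.mem_cons_self a s)) ?_)
      exact ih fun i hi => h i (Finset.mem_cons_of_mem hi)

lemma na_add_eq {u v : K} (h : ‖v‖ < ‖u‖) : ‖u + v‖ = ‖u‖ := by
  have h1 : ‖u + v‖ ≤ ‖u‖ := le_trans (hna u v) (max_le le_rfl h.le)
  refine le_antisymm h1 ?_
  have : ‖u‖ ≤ max ‖u + v‖ ‖v‖ := by
    have := hna (u + v) (-v)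
    simpa using this
  rcases max_cases ‖u + v‖ ‖v‖ with ⟨he, _⟩ | ⟨he, _⟩
  · rw [he] at this; exact this
  · rw [he] at this; exact absurd (lt_of_le_of_lt this h) (lt_irrefl _)

lemma na_sub_eq {u v : K} (h : ‖v‖ < ‖u‖) : ‖u - v‖ = ‖u‖ := by
  have := na_add_eq hna (v := -v) (u := u) (by simpa using h)
  simpa [sub_eq_add_neg] using this

lemma na_nat_le_one (k : ℕ) : ‖(k : K)‖ ≤ 1 := by
  induction k with
  | zero => simp
  | succ k ih =>
      push_cast
      exact le_trans (hna _ _) (by simp [ih])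

end Helpers

section Helpers2
variable {K : Type*} [NormedField K] (hna : IsNonarchimedean (fun x : K => ‖x‖))

lemma norm_one_of_pow_eq_one {ζ : K} {m : ℕ} (hm : 1 ≤ m) (h : ζ ^ m = 1) : ‖ζ‖ = 1 := by
  have h1 : ‖ζ‖ ^ m = 1 := by rw [← norm_pow, h, norm_one]
  have h0 : 0 ≤ ‖ζ‖ := norm_nonneg _
  rcases lt_trichotomy ‖ζ‖ 1 with hl | he | hg
  · exact absurd h1 (by nlinarith [pow_lt_one₀ h0 hl (by omega : m ≠ 0)])
  · exact he
  · exact absurd h1 (by nlinarith [one_lt_pow₀ hg (by omega : m ≠ 0)])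

include hna

lemma na_norm_nat_le_sub {ζ : K} {m : ℕ} (hm : 1 ≤ m) (hζ : ζ ≠ 1) (hpow : ζ ^ m = 1) :
    ‖(m : K)‖ ≤ ‖ζ - 1‖ := by
  set t := ζ - 1 with ht
  have ht0 : t ≠ 0 := sub_ne_zero.mpr hζ
  have hζ1 : ‖ζ‖ = 1 := norm_one_of_pow_eq_one hm hpow
  have htle : ‖t‖ ≤ 1 := by
    have := hna ζ (-1)
    simpa [ht, sub_eq_add_neg, hζ1] using this
  have hkey : (t + 1) ^ m = ∑ k ∈ Finset.range (m + 1), t ^ k * ((m.choose k : ℕ) : K) := by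
    rw [add_pow]; simp
  have hone : (∑ k ∈ Finset.range (m + 1), t ^ k * ((m.choose k : ℕ) : K)) = 1 := by
    rw [← hkey]; simpa [ht] using hpow
  rw [Finset.range_eq_Ico, Finset.sum_eq_sum_Ico_succ_bot (by omega : 0 < m + 1),
    Finset.sum_eq_sum_Ico_succ_bot (by omega : 1 < m + 1)] at hone
  simp only [pow_zero, pow_one, Nat.choose_zero_right, Nat.choose_one_right, Nat.cast_one,
    one_mul, mul_one] at hone
  have heq : t * (m : K) = -∑ k ∈ Finset.Ico 2 (m + 1), t ^ k * ((m.choose k : ℕ) : K) := by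
    linear_combination hone
  have hbound : ‖t * (m : K)‖ ≤ ‖t‖ ^ 2 := by
    rw [heq, norm_neg]
    refine na_sum_le hna _ _ (by positivity) ?_
    intro k hk
    rw [Finset.mem_Ico] at hk
    rw [norm_mul, norm_pow]
    calc ‖t‖ ^ k * ‖((m.choose k : ℕ) : K)‖ ≤ ‖t‖ ^ k * 1 := by
          exact mul_le_mul_of_nonneg_left (na_nat_le_one hna _) (by positivity)
      _ = ‖t‖ ^ k := mul_one _
      _ ≤ ‖t‖ ^ 2 := pow_le_pow_of_le_one (norm_nonneg _) htle hk.1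
  rw [norm_mul] at hbound
  have htpos : 0 < ‖t‖ := norm_pos_iff.mpr ht0
  nlinarith

lemma na_pow_sub_one_le {ζ : K} (hζ : ‖ζ‖ ≤ 1) (r : ℕ) : ‖ζ ^ r - 1‖ ≤ ‖ζ - 1‖ := by
  rw [← geom_sum_mul, norm_mul]
  calc ‖∑ i ∈ Finset.range r, ζ ^ i‖ * ‖ζ - 1‖ ≤ 1 * ‖ζ - 1‖ := by
        refine mul_le_mul_of_nonneg_right ?_ (norm_nonneg _)
        refine na_sum_le hna _ _ zero_le_one ?_
        intro i _
        rw [norm_pow]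
        exact pow_le_one₀ (norm_nonneg _) hζ
    _ = ‖ζ - 1‖ := one_mul _

variable {ℓ : ℕ} (hℓ : ℓ.Prime) (hnorm : ‖(ℓ : K)‖ = (ℓ : ℝ)⁻¹)
include hℓ hnorm

lemma na_coprime_norm_one {k : ℕ} (hcop : Nat.Coprime ℓ k) : ‖(k : K)‖ = 1 := by
  have hle : ‖(k : K)‖ ≤ 1 := na_nat_le_one hna k
  refine le_antisymm hle ?_
  have hbez : (1 : ℤ) = ℓ * Nat.gcdA ℓ k + k * Nat.gcdB ℓ k := by
    have := Nat.gcd_eq_gcd_ab ℓ k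
    rwa [hcop] at this
  have hint : ∀ a : ℤ, ‖(a : K)‖ ≤ 1 := by
    intro a
    have h1 : ‖((a.natAbs : ℕ) : K)‖ ≤ 1 := na_nat_le_one hna _
    rcases Int.natAbs_eq a with h | h
    · rw [h, Int.cast_natCast]; exact h1
    · rw [h, Int.cast_neg, Int.cast_natCast, norm_neg]; exact h1
  have hcast : (1 : K) = (ℓ : K) * ((Nat.gcdA ℓ k : ℤ) : K) + (k : K) * ((Nat.gcdB ℓ k : ℤ) : K) := by
    exact_mod_cast congrArg (fun z : ℤ => ((z : K))) hbez
  have h1 : (1:ℝ) ≤ max (‖(ℓ : K)‖ * ‖((Nat.gcdA ℓ k : ℤ) : K)‖) (‖(k : K)‖ * ‖((Nat.gcdB ℓ k : ℤ) : K)‖) := by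
    have := hna ((ℓ : K) * ((Nat.gcdA ℓ k : ℤ) : K)) ((k : K) * ((Nat.gcdB ℓ k : ℤ) : K))
    simp only [← hcast] at this
    simpa [norm_mul] using this
  have hℓlt : ‖(ℓ : K)‖ * ‖((Nat.gcdA ℓ k : ℤ) : K)‖ < 1 := by
    have h2 : (ℓ:ℝ)⁻¹ < 1 := by
      rw [inv_lt_one_iff₀]; right; exact_mod_cast hℓ.one_lt
    calc ‖(ℓ : K)‖ * ‖((Nat.gcdA ℓ k : ℤ) : K)‖ ≤ ‖(ℓ : K)‖ * 1 :=
          mul_le_mul_of_nonneg_left (hint _) (norm_nonneg _)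
      _ = (ℓ:ℝ)⁻¹ := by rw [mul_one, hnorm]
      _ < 1 := h2
  rcases max_cases (‖(ℓ : K)‖ * ‖((Nat.gcdA ℓ k : ℤ) : K)‖) (‖(k : K)‖ * ‖((Nat.gcdB ℓ k : ℤ) : K)‖) with
    ⟨he, _⟩ | ⟨he, _⟩
  · rw [he] at h1; linarith
  · rw [he] at h1
    calc (1:ℝ) ≤ ‖(k : K)‖ * ‖((Nat.gcdB ℓ k : ℤ) : K)‖ := h1
      _ ≤ ‖(k : K)‖ * 1 := mul_le_mul_of_nonneg_left (hint _) (norm_nonneg _)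
      _ = ‖(k : K)‖ := mul_one _

lemma na_prime_pow_case : ∀ (k : ℕ) (ζ : K), ζ ≠ 1 → ζ ^ (ℓ ^ k) = 1 → (ℓ : ℝ)⁻¹ ≤ ‖ζ - 1‖ := by
  intro k
  induction k with
  | zero => intro ζ hζ h; simp at h; exact absurd h hζ
  | succ k ih =>
      intro ζ hζ h
      by_cases hc : ζ ^ ℓ = 1
      · have := na_norm_nat_le_sub hna hℓ.one_lt.le hζ hc
        rwa [hnorm] at this
      · have hζle : ‖ζ‖ ≤ 1 := by
          have := norm_one_of_pow_eq_one (m := ℓ ^ (k+1)) (Nat.one_le_pow _ _ hℓ.pos) h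
          exact this.le
        have hpow2 : (ζ ^ ℓ) ^ (ℓ ^ k) = 1 := by
          rw [← pow_mul]
          rw [show ℓ * ℓ ^ k = ℓ ^ (k + 1) by ring]
          exact h
        have := ih (ζ ^ ℓ) hc hpow2
        calc (ℓ : ℝ)⁻¹ ≤ ‖ζ ^ ℓ - 1‖ := this
          _ ≤ ‖ζ - 1‖ := na_pow_sub_one_le hna hζle ℓ

lemma na_root_of_unity_sub_one {ζ : K} {m : ℕ} (hm : 1 ≤ m) (hζ : ζ ≠ 1) (hpow : ζ ^ m = 1) :
    (ℓ : ℝ)⁻¹ ≤ ‖ζ - 1‖ := by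
  set k := m.factorization ℓ with hk
  by_cases hA : ζ ^ (ℓ ^ k) = 1
  · exact na_prime_pow_case hna hℓ hnorm k ζ hζ hA
  · set ξ := ζ ^ (ℓ ^ k) with hξ
    have hm0 : m ≠ 0 := by omega
    have hmul : ℓ ^ k * (m / ℓ ^ k) = m := Nat.ordProj_mul_ordCompl_eq_self m ℓ
    have hcop : Nat.Coprime ℓ (m / ℓ ^ k) := Nat.coprime_ordCompl hℓ hm0
    have hm' : 1 ≤ m / ℓ ^ k := Nat.ordCompl_pos ℓ hm0
    have hξpow : ξ ^ (m / ℓ ^ k) = 1 := by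
      rw [hξ, ← pow_mul, hmul]; exact hpow
    have h1 : ‖((m / ℓ ^ k : ℕ) : K)‖ ≤ ‖ξ - 1‖ := na_norm_nat_le_sub hna hm' hA hξpow
    rw [na_coprime_norm_one hna hℓ hnorm hcop] at h1
    have hζle : ‖ζ‖ ≤ 1 := (norm_one_of_pow_eq_one hm hpow).le
    have h2 : ‖ξ - 1‖ ≤ ‖ζ - 1‖ := na_pow_sub_one_le hna hζle _
    have h3 : (ℓ:ℝ)⁻¹ ≤ 1 := by
      rw [inv_le_one_iff₀]; right; exact_mod_cast hℓ.one_lt.le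
    linarith

lemma na_root_of_unity_sep {ζ₁ ζ₂ : K} {m₁ m₂ : ℕ} (hm₁ : 1 ≤ m₁) (hm₂ : 1 ≤ m₂)
    (h₁ : ζ₁ ^ m₁ = 1) (h₂ : ζ₂ ^ m₂ = 1) (hne : ζ₁ ≠ ζ₂) :
    (ℓ : ℝ)⁻¹ ≤ ‖ζ₁ - ζ₂‖ := by
  have hn₂ : ‖ζ₂‖ = 1 := norm_one_of_pow_eq_one hm₂ h₂
  have hζ₂0 : ζ₂ ≠ 0 := by
    intro h; rw [h] at hn₂; simp at hn₂
  set η := ζ₁ / ζ₂ with hη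
  have hηne : η ≠ 1 := by
    simp only [hη, Ne, div_eq_one_iff_eq hζ₂0]
    exact hne
  have hηpow : η ^ (m₁ * m₂) = 1 := by
    rw [hη, div_pow, pow_mul, h₁, one_pow, mul_comm m₁ m₂, pow_mul, h₂, one_pow, div_one]
  have := na_root_of_unity_sub_one hna hℓ hnorm (Nat.mul_pos hm₁ hm₂) hηne hηpow
  have heq : ζ₁ - ζ₂ = ζ₂ * (η - 1) := by
    rw [hη]; field_simp
  rw [heq, norm_mul, hn₂, one_mul]
  exact this

end Helpers2

section Main

variable {K : Type*} [NormedField K]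

lemma ms_norm_prod (m : Multiset K) : ‖m.prod‖ = (m.map fun u => ‖u‖).prod := by
  induction m using Multiset.induction_on with
  | empty => simp
  | cons a s ih => simp [norm_mul, ih]

lemma ms_prod_le_one {m : Multiset ℝ} (h : ∀ u ∈ m, 0 ≤ u ∧ u ≤ 1) : m.prod ≤ 1 := by
  induction m using Multiset.induction_on with
  | empty => simp
  | cons a s ih =>
      rw [Multiset.prod_cons]
      have ha := h a (Multiset.mem_cons_self a s)
      have hs : s.prod ≤ 1 := ih fun u hu => h u (Multiset.mem_cons_of_mem hu)
      have hs0 : 0 ≤ s.prod := Multiset.prod_nonneg fun u hu => (h u (Multiset.mem_cons_of_mem hu)).1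
      nlinarith [ha.1, ha.2]

lemma ms_le_prod {m : Multiset ℝ} {c : ℝ} (hc : 0 ≤ c) (h : ∀ u ∈ m, c ≤ u) :
    c ^ Multiset.card m ≤ m.prod := by
  induction m using Multiset.induction_on with
  | empty => simp
  | cons a s ih =>
      rw [Multiset.prod_cons, Multiset.card_cons, pow_succ, mul_comm (c ^ Multiset.card s) c]
      have ha := h a (Multiset.mem_cons_self a s)
      have hs := ih fun u hu => h u (Multiset.mem_cons_of_mem hu)
      exact mul_le_mul ha hs (pow_nonneg hc _) (le_trans hc ha)

variable (hna : IsNonarchimedean (fun x : K => ‖x‖))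
variable {ℓ : ℕ} (hℓ : ℓ.Prime) (hnorm : ‖(ℓ : K)‖ = (ℓ : ℝ)⁻¹)
include hna hℓ hnorm

lemma eval_decomp [DecidableEq K] {n : ℕ} (hn1 : 1 ≤ n) (R : Multiset K)
    (hRcard : Multiset.card R ≤ n)
    (hru : ∀ r ∈ R, ∃ m : ℕ, 1 ≤ m ∧ r ^ m = 1)
    {x : K} (hx : ∃ m : ℕ, 1 ≤ m ∧ x ^ m = 1) :
    ‖(R.map fun r => (x + (ℓ : K) ^ (n + 1)) - r).prod‖
        ≤ ((ℓ : ℝ)⁻¹ ^ (n + 1)) ^ (R.count x) ∧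
    ((ℓ : ℝ)⁻¹ ^ (n + 1)) ^ (R.count x) * (ℓ : ℝ)⁻¹ ^ n
        ≤ ‖(R.map fun r => (x + (ℓ : K) ^ (n + 1)) - r).prod‖ := by
  set e : ℝ := (ℓ : ℝ)⁻¹ with hedef
  have he0 : 0 < e := by
    rw [hedef]
    exact inv_pos.mpr (by exact_mod_cast hℓ.pos)
  have he1 : e < 1 := by
    rw [hedef, inv_lt_one_iff₀]; right; exact_mod_cast hℓ.one_lt
  set t : K := (ℓ : K) ^ (n + 1) with htdef
  have hnt : ‖t‖ = e ^ (n + 1) := by rw [htdef, norm_pow, hnorm]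
  have hntlt : ‖t‖ < e := by
    rw [hnt]
    calc e ^ (n + 1) < e ^ 1 := pow_lt_pow_right_of_lt_one₀ he0 he1 (by omega)
      _ = e := pow_one e
  set y : K := x + t with hydef
  have hyx : y - x = t := by rw [hydef]; ring
  have hdec : R.filter (· = x) + R.filter (fun r => ¬ r = x) = R := Multiset.filter_add_not _ R
  have hcount : Multiset.card (R.filter (· = x)) = R.count x := by
    rw [Multiset.filter_eq', Multiset.card_replicate]
  have hfirst : ((R.filter (· = x)).map ((fun u => ‖u‖) ∘ fun r => y - r)).prod
      = (e ^ (n + 1)) ^ R.count x := by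
    rw [Multiset.filter_eq', Multiset.map_replicate, Multiset.prod_replicate]
    simp only [Function.comp_apply, hyx]
    rw [hnt]
  have hsep : ∀ r ∈ R.filter (fun r => ¬ r = x),
      e ≤ ‖y - r‖ ∧ ‖y - r‖ ≤ 1 := by
    intro r hr
    have hrR := Multiset.mem_of_mem_filter hr
    have hrx : r ≠ x := by
      have := Multiset.of_mem_filter hr
      simpa using this
    obtain ⟨m₁, hm₁, hpow₁⟩ := hx
    obtain ⟨m₂, hm₂, hpow₂⟩ := hru r hrR
    have hsepr : e ≤ ‖x - r‖ :=
      na_root_of_unity_sep hna hℓ hnorm hm₁ hm₂ hpow₁ hpow₂ (Ne.symm hrx)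
    have hyr : y - r = (x - r) + t := by rw [hydef]; ring
    have heq : ‖y - r‖ = ‖x - r‖ := by
      rw [hyr]
      exact na_add_eq hna (lt_of_lt_of_le hntlt hsepr)
    constructor
    · rw [heq]; exact hsepr
    · rw [heq]
      have hx1 : ‖x‖ = 1 := norm_one_of_pow_eq_one hm₁ hpow₁
      have hr1 : ‖r‖ = 1 := norm_one_of_pow_eq_one hm₂ hpow₂
      have := hna x (-r)
      simpa [sub_eq_add_neg, hx1, hr1] using this
  set P := ((R.filter (fun r => ¬ r = x)).map ((fun u => ‖u‖) ∘ fun r => y - r)).prod with hP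
  have hPle : P ≤ 1 := by
    refine ms_prod_le_one ?_
    intro u hu
    rw [Multiset.mem_map] at hu
    obtain ⟨r, hr, rfl⟩ := hu
    exact ⟨norm_nonneg _, (hsep r hr).2⟩
  have hPge : e ^ n ≤ P := by
    have h1 : e ^ Multiset.card ((R.filter (fun r => ¬ r = x)).map ((fun u => ‖u‖) ∘ fun r => y - r)) ≤ P := by
      refine ms_le_prod he0.le ?_
      intro u hu
      rw [Multiset.mem_map] at hu
      obtain ⟨r, hr, rfl⟩ := hu
      exact (hsep r hr).1
    refine le_trans ?_ h1
    rw [Multiset.card_map]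
    refine pow_le_pow_of_le_one he0.le he1.le ?_
    calc Multiset.card (R.filter (fun r => ¬ r = x)) ≤ Multiset.card R :=
          Multiset.card_le_card (Multiset.filter_le _ R)
      _ ≤ n := hRcard
  have hmain : ‖(R.map fun r => y - r).prod‖ = (e ^ (n + 1)) ^ R.count x * P := by
    rw [ms_norm_prod, Multiset.map_map]
    conv_lhs => rw [← hdec]
    rw [Multiset.map_add, Multiset.prod_add, hfirst, hP]
  rw [hmain]
  constructor
  · calc (e ^ (n + 1)) ^ R.count x * P ≤ (e ^ (n + 1)) ^ R.count x * 1 :=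
        mul_le_mul_of_nonneg_left hPle (by positivity)
      _ = (e ^ (n + 1)) ^ R.count x := mul_one _
  · exact mul_le_mul_of_nonneg_left hPge (by positivity)

end Main

section Poly

variable {K : Type*} [NormedField K] {n : ℕ}

lemma fp_degree_sum_lt (co : Fin n → K) :
    (∑ i : Fin n, C (co i) * X ^ (i : ℕ)).degree < (n : WithBot ℕ) := by
  refine lt_of_le_of_lt (Polynomial.degree_sum_le _ _) ?_
  rw [Finset.sup_lt_iff (by exact_mod_cast WithBot.bot_lt_coe n)]
  intro j _
  refine lt_of_le_of_lt (degree_C_mul_X_pow_le _ _) ?_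
  exact_mod_cast j.isLt

lemma fp_monic (co : Fin n → K) : (X ^ n + ∑ i : Fin n, C (co i) * X ^ (i : ℕ)).Monic :=
  monic_X_pow_add (fp_degree_sum_lt co)

lemma fp_natDegree (co : Fin n → K) :
    (X ^ n + ∑ i : Fin n, C (co i) * X ^ (i : ℕ)).natDegree = n := by
  have h : (X ^ n + ∑ i : Fin n, C (co i) * X ^ (i : ℕ)).degree = (n : WithBot ℕ) := by
    rw [degree_add_eq_left_of_degree_lt (by rw [degree_X_pow]; exact fp_degree_sum_lt co),
      degree_X_pow]
  exact natDegree_eq_of_degree_eq_some h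

lemma fp_coeff (co : Fin n → K) (i : Fin n) :
    (X ^ n + ∑ j : Fin n, C (co j) * X ^ (j : ℕ)).coeff (i : ℕ) = co i := by
  rw [coeff_add, coeff_X_pow, if_neg (by omega : (i : ℕ) ≠ n)]
  rw [finset_sum_coeff]
  rw [Finset.sum_eq_single i]
  · simp [coeff_C_mul, coeff_X_pow]
  · intro j _ hj
    rw [coeff_C_mul, coeff_X_pow, if_neg, mul_zero]
    intro h
    exact hj (Fin.ext h.symm)
  · intro h
    exact absurd (Finset.mem_univ i) h

end Poly

section Key

variable {K : Type*} [NormedField K] [IsAlgClosed K]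
variable (hna : IsNonarchimedean (fun x : K => ‖x‖))
variable {ℓ : ℕ} (hℓ : ℓ.Prime) (hnorm : ‖(ℓ : K)‖ = (ℓ : ℝ)⁻¹)
include hna hℓ hnorm

lemma key_asym [DecidableEq K] {n : ℕ} (p q : Fin n → K)
    (hp : ∀ x : K, (X ^ n + ∑ i : Fin n, C (p i) * X ^ (i : ℕ)).IsRoot x →
      ∃ m : ℕ, 1 ≤ m ∧ x ^ m = 1)
    (hq : ∀ x : K, (X ^ n + ∑ i : Fin n, C (q i) * X ^ (i : ℕ)).IsRoot x →
      ∃ m : ℕ, 1 ≤ m ∧ x ^ m = 1)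
    {x : K}
    (hcnt : (X ^ n + ∑ i : Fin n, C (p i) * X ^ (i : ℕ)).roots.count x
      < (X ^ n + ∑ i : Fin n, C (q i) * X ^ (i : ℕ)).roots.count x)
    (hd : dist p q < ((ℓ : ℝ)⁻¹) ^ ((n + 1) * n + n)) : False := by
  set f := X ^ n + ∑ i : Fin n, C (p i) * X ^ (i : ℕ) with hfdef
  set g := X ^ n + ∑ i : Fin n, C (q i) * X ^ (i : ℕ) with hgdef
  set e : ℝ := (ℓ : ℝ)⁻¹ with hedef
  have he0 : 0 < e := by
    rw [hedef]
    exact inv_pos.mpr (by exact_mod_cast hℓ.pos)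
  have he1 : e < 1 := by
    rw [hedef, inv_lt_one_iff₀]; right; exact_mod_cast hℓ.one_lt
  have hgcard : Multiset.card g.roots ≤ n := by
    have := Polynomial.card_roots' g
    rwa [hgdef, fp_natDegree] at this
  have hfcard : Multiset.card f.roots ≤ n := by
    have := Polynomial.card_roots' f
    rwa [hfdef, fp_natDegree] at this
  have hn1 : 1 ≤ n := by
    have h1 := Multiset.count_le_card x g.roots
    omega
  have hxg : x ∈ g.roots := Multiset.count_pos.mp (by omega)
  have hxroot : g.IsRoot x := (Polynomial.mem_roots'.mp hxg).2
  have hxru : ∃ m : ℕ, 1 ≤ m ∧ x ^ m = 1 := hq x hxroot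
  set t : K := (ℓ : K) ^ (n + 1) with htdef
  set y : K := x + t with hydef
  -- evaluations as products over roots
  have hfeval : f.eval y = (f.roots.map fun r => y - r).prod := by
    conv_lhs =>
      rw [Splits.eq_prod_roots_of_monic (IsAlgClosed.splits f) (hfdef ▸ fp_monic p)]
    rw [eval_multiset_prod, Multiset.map_map]
    simp [Function.comp]
  have hgeval : g.eval y = (g.roots.map fun r => y - r).prod := by
    conv_lhs =>
      rw [Splits.eq_prod_roots_of_monic (IsAlgClosed.splits g) (hgdef ▸ fp_monic q)]
    rw [eval_multiset_prod, Multiset.map_map]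
    simp [Function.comp]
  have hfru : ∀ r ∈ f.roots, ∃ m : ℕ, 1 ≤ m ∧ r ^ m = 1 :=
    fun r hr => hp r (Polynomial.mem_roots'.mp hr).2
  have hgru : ∀ r ∈ g.roots, ∃ m : ℕ, 1 ≤ m ∧ r ^ m = 1 :=
    fun r hr => hq r (Polynomial.mem_roots'.mp hr).2
  obtain ⟨hfub, hflb⟩ := eval_decomp hna hℓ hnorm hn1 f.roots hfcard hfru hxru
  obtain ⟨hgub, hglb⟩ := eval_decomp hna hℓ hnorm hn1 g.roots hgcard hgru hxru
  rw [← hydef, ← hfeval] at hfub hflb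
  rw [← hydef, ← hgeval] at hgub hglb
  set a := f.roots.count x
  set b := g.roots.count x
  have hent1 : (0:ℝ) < e ^ (n + 1) := by positivity
  have hent1le : e ^ (n + 1) ≤ 1 := by
    exact pow_le_one₀ he0.le he1.le
  -- strict comparison
  have hlt : ‖g.eval y‖ < ‖f.eval y‖ := by
    calc ‖g.eval y‖ ≤ (e ^ (n + 1)) ^ b := hgub
      _ ≤ (e ^ (n + 1)) ^ (a + 1) := pow_le_pow_of_le_one hent1.le hent1le (by omega)
      _ = (e ^ (n + 1)) ^ a * e ^ (n + 1) := pow_succ _ _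
      _ < (e ^ (n + 1)) ^ a * e ^ n :=
        mul_lt_mul_of_pos_left (pow_lt_pow_right_of_lt_one₀ he0 he1 (by omega)) (by positivity)
      _ ≤ ‖f.eval y‖ := hflb
  have heval_eq : ‖f.eval y - g.eval y‖ = ‖f.eval y‖ := na_sub_eq hna hlt
  -- lower bound
  have ha_n : a ≤ n := le_trans (Multiset.count_le_card x f.roots) hfcard
  have hlow : e ^ ((n + 1) * n + n) ≤ ‖f.eval y‖ := by
    calc e ^ ((n + 1) * n + n) = (e ^ (n + 1)) ^ n * e ^ n := by
          rw [← pow_mul, ← pow_add]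
      _ ≤ (e ^ (n + 1)) ^ a * e ^ n :=
          mul_le_mul_of_nonneg_right (pow_le_pow_of_le_one hent1.le hent1le ha_n) (by positivity)
      _ ≤ ‖f.eval y‖ := hflb
  -- upper bound
  obtain ⟨m₁, hm₁, hpow₁⟩ := hxru
  have hx1 : ‖x‖ = 1 := norm_one_of_pow_eq_one hm₁ hpow₁
  have hyle : ‖y‖ ≤ 1 := by
    have htle : ‖t‖ ≤ 1 := by
      rw [htdef, norm_pow, hnorm]
      exact hent1le
    have := hna x t
    rw [hydef]
    calc ‖x + t‖ ≤ max ‖x‖ ‖t‖ := this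
      _ ≤ 1 := max_le hx1.le htle
  have hdiff : f.eval y - g.eval y = ∑ i : Fin n, (p i - q i) * y ^ (i : ℕ) := by
    rw [hfdef, hgdef]
    simp only [eval_add, eval_pow, eval_X, eval_finset_sum, eval_mul, eval_C]
    rw [add_sub_add_left_eq_sub, ← Finset.sum_sub_distrib]
    exact Finset.sum_congr rfl fun i _ => (sub_mul _ _ _).symm
  have hup : ‖f.eval y - g.eval y‖ ≤ dist p q := by
    rw [hdiff]
    refine na_sum_le hna _ _ dist_nonneg ?_
    intro i _
    rw [norm_mul, norm_pow]
    calc ‖p i - q i‖ * ‖y‖ ^ (i : ℕ) ≤ ‖p i - q i‖ * 1 :=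
          mul_le_mul_of_nonneg_left (pow_le_one₀ (norm_nonneg _) hyle) (norm_nonneg _)
      _ = ‖(p - q) i‖ := by rw [mul_one, Pi.sub_apply]
      _ ≤ ‖p - q‖ := norm_le_pi_norm _ i
      _ = dist p q := (dist_eq_norm p q).symm
  rw [heval_eq] at hup
  linarith

lemma key_sep {n : ℕ} (p q : Fin n → K)
    (hp : ∀ x : K, (X ^ n + ∑ i : Fin n, C (p i) * X ^ (i : ℕ)).IsRoot x →
      ∃ m : ℕ, 1 ≤ m ∧ x ^ m = 1)
    (hq : ∀ x : K, (X ^ n + ∑ i : Fin n, C (q i) * X ^ (i : ℕ)).IsRoot x →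
      ∃ m : ℕ, 1 ≤ m ∧ x ^ m = 1)
    (hd : dist p q < ((ℓ : ℝ)⁻¹) ^ ((n + 1) * n + n)) : p = q := by
  classical
  by_contra hne
  obtain ⟨i, hi⟩ := Function.ne_iff.mp hne
  have hroots_ne : (X ^ n + ∑ j : Fin n, C (p j) * X ^ (j : ℕ)).roots
      ≠ (X ^ n + ∑ j : Fin n, C (q j) * X ^ (j : ℕ)).roots := by
    intro h
    have hfg : (X ^ n + ∑ j : Fin n, C (p j) * X ^ (j : ℕ))
        = (X ^ n + ∑ j : Fin n, C (q j) * X ^ (j : ℕ)) := by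
      rw [Splits.eq_prod_roots_of_monic (IsAlgClosed.splits _) (fp_monic p),
        Splits.eq_prod_roots_of_monic (IsAlgClosed.splits _) (fp_monic q), h]
    have := congrArg (fun h : K[X] => h.coeff (i : ℕ)) hfg
    simp only [fp_coeff] at this
    exact hi this
  rw [Ne, Multiset.ext] at hroots_ne
  push_neg at hroots_ne
  obtain ⟨x, hx⟩ := hroots_ne
  rcases Nat.lt_or_ge ((X ^ n + ∑ j : Fin n, C (p j) * X ^ (j : ℕ)).roots.count x)
      ((X ^ n + ∑ j : Fin n, C (q j) * X ^ (j : ℕ)).roots.count x) with h | h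
  · exact key_asym hna hℓ hnorm p q hp hq h hd
  · have hlt : (X ^ n + ∑ j : Fin n, C (q j) * X ^ (j : ℕ)).roots.count x
        < (X ^ n + ∑ j : Fin n, C (p j) * X ^ (j : ℕ)).roots.count x :=
      lt_of_le_of_ne h (Ne.symm hx)
    exact key_asym hna hℓ hnorm q p hq hp hlt (by rwa [dist_comm])

end Key

open Polynomial in
/-- Let `ℓ` be a prime and `K` an algebraically closed normed field with
nonarchimedean norm satisfying `‖(ℓ : K)‖ = (ℓ : ℝ)⁻¹`. Identify a monic polynomial
`X^n + c_{n-1} X^{n-1} + ⋯ + c₀` of degree `n` over `K` with the point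
`(c₀, …, c_{n-1}) ∈ Kⁿ`. The subset of `Kⁿ` corresponding to the monic polynomials of
degree `n` all of whose roots in `K` are roots of unity is closed and discrete. -/
theorem stmt3 (ℓ : ℕ) (hℓprime : ℓ.Prime)
    (K : Type*) [NormedField K] [IsAlgClosed K]
    (hna : IsNonarchimedean (fun x : K => ‖x‖))
    (hnorm : ‖(ℓ : K)‖ = (ℓ : ℝ)⁻¹)
    (n : ℕ)
    (S : Set (Fin n → K))
    (hS : S = {co : Fin n → K |
      ∀ x : K, (X ^ n + ∑ i : Fin n, C (co i) * X ^ (i : ℕ)).IsRoot x →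
        ∃ m : ℕ, 1 ≤ m ∧ x ^ m = 1}) :
    IsClosed S ∧ DiscreteTopology S := by
  set ε : ℝ := ((ℓ : ℝ)⁻¹) ^ ((n + 1) * n + n) with hε
  have hεpos : 0 < ε := by
    rw [hε]
    have : (0:ℝ) < (ℓ:ℝ)⁻¹ := inv_pos.mpr (by exact_mod_cast hℓprime.pos)
    positivity
  have hsep : ∀ p ∈ S, ∀ q ∈ S, dist p q < ε → p = q := by
    intro p hp q hq hd
    rw [hS] at hp hq
    exact key_sep hna hℓprime hnorm p q hp hq hd
  constructor
  · refine Metric.isClosed_of_pairwise_le_dist hεpos ?_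
    intro p hp q hq hne
    by_contra hc
    push_neg at hc
    exact hne (hsep p hp q hq hc)
  · rw [discreteTopology_iff_isOpen_singleton]
    intro a
    have heq : ({a} : Set S) = Subtype.val ⁻¹' Metric.ball (a : Fin n → K) ε := by
      ext b
      simp only [Set.mem_singleton_iff, Set.mem_preimage, Metric.mem_ball]
      constructor
      · rintro rfl
        simpa using hεpos
      · intro hb
        exact Subtype.ext (hsep _ b.2 _ a.2 hb)
    rw [heq]
    exact Metric.isOpen_ball.preimage continuous_subtype_val
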